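/- Let h_1, …, h_n be positive histograms with d bins and π_1, …, π_n > 0 weights with Σ_j π_j = 1. Let a^i = Σ_{j=1}^n π_j h_j^i be the weighted arithmetic means and g^i = Π_{j=1}^n (h_j^i)^{π_j} the weighted geometric means. Then for every x ∈ (0,∞)^d, Σ_{j=1}^n π_j J(h_j, x) = Σ_{i=1}^d ( x^i·log(x^i/g^i) − a^i·log x^i ) + Σ_{i=1}^d Σ_{j=1}^n π_j h_j^i·log h_j^i; in particular the weighted Jeffreys objective differs from Σ_{i=1}^d ( x^i·log(x^i/g^i) − a^i·log x^i ) by a constant independent of x. -/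

import Mathlib

open scoped BigOperators

/-- Jeffreys divergence between positive histograms with `d` bins. -/
noncomputable def Jeffreys {d : ℕ} (p q : Fin d → ℝ) : ℝ :=
  ∑ i, (p i - q i) * Real.log (p i / q i)

/-- the weighted Jeffreys objective equals
`∑ i (xⁱ log(xⁱ/gⁱ) − aⁱ log xⁱ)` plus a constant independent of `x`. -/
theorem jeffreys_objective_decomposition
    (d n : ℕ) (h : Fin n → Fin d → ℝ) (π : Fin n → ℝ)
    (hpos : ∀ j i, 0 < h j i) (hπ : ∀ j, 0 < π j) (hπ1 : ∑ j, π j = 1)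
    (x : Fin d → ℝ) (hx : ∀ i, 0 < x i) :
    ∑ j, π j * Jeffreys (h j) x =
      (∑ i, (x i * Real.log (x i / ∏ j, h j i ^ π j)
              - (∑ j, π j * h j i) * Real.log (x i)))
        + ∑ i, ∑ j, π j * (h j i * Real.log (h j i)) := by
  unfold Jeffreys
  simp only [Finset.mul_sum]
  rw [Finset.sum_comm, ← Finset.sum_add_distrib]
  refine Finset.sum_congr rfl fun i _ => ?_
  have hg : Real.log (∏ j, h j i ^ π j) = ∑ j, π j * Real.log (h j i) := by
    rw [Real.log_prod fun j _ => (Real.rpow_pos_of_pos (hpos j i) _).ne']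
    exact Finset.sum_congr rfl fun j _ => Real.log_rpow (hpos j i) _
  have hlog : ∀ j, Real.log (h j i / x i) = Real.log (h j i) - Real.log (x i) :=
    fun j => Real.log_div (hpos j i).ne' (hx i).ne'
  rw [Real.log_div (hx i).ne' (Finset.prod_pos fun j _ =>
    (Real.rpow_pos_of_pos (hpos j i) _)).ne', hg]
  simp only [hlog]
  have key : ∑ j, π j * ((h j i - x i) * (Real.log (h j i) - Real.log (x i)))
      = ∑ j, (π j * (h j i * Real.log (h j i)) - π j * h j i * Real.log (x i)
              - x i * (π j * Real.log (h j i)) + x i * Real.log (x i) * π j) := by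
    refine Finset.sum_congr rfl fun j _ => ?_; ring
  rw [key]
  simp only [Finset.sum_add_distrib, Finset.sum_sub_distrib, ← Finset.sum_mul,
    ← Finset.mul_sum, hπ1]
  ring
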